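/- Let a, d, u, w be integers with d ≥ 1 and w ≥ 0. Then ∑_{k+m+r=d, k,m,r≥0, r even} (-1)^r v^{binom(r+1,2) − 2(k-1)m}/([r]_v![2k]_v!![2m]_v!!) + ∑_{k+m+r=d, k,m,r≥0, r odd} (-1)^r v^{binom(r+1,2) − 2k(m-1)}/([r]_v![2k]_v!![2m]_v!!) = 0 in ℚ(v). -/

import Mathlib

open scoped BigOperators
open Finset

noncomputable section

abbrev K : Type := RatFunc ℚ

def v : K := RatFunc.X

/-- Balanced quantum integer `[n]_v = (v^n - v^{-n})/(v - v⁻¹)`. -/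
def qint (n : ℤ) : K := (v ^ n - v ^ (-n)) / (v - v⁻¹)

/-- Balanced quantum factorial `[n]_v!`. -/
def qfact : ℕ → K
  | 0 => 1
  | n + 1 => qfact n * qint ((n : ℤ) + 1)

/-- Balanced Gaussian binomial coefficient `[p choose t]_v`. -/
def qbinom (p t : ℕ) : K := qfact p / (qfact t * qfact (p - t))

/-- Quantum double factorial `[2k]_v!! = [2k]_v [2k-2]_v ⋯ [2]_v`. -/
def ddfact : ℕ → K
  | 0 => 1
  | k + 1 => ddfact k * qint (2 * ((k : ℤ) + 1))


def c2 (x : ℤ) : ℤ := x * (x - 1) / 2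

lemma hv0 : (v : K) ≠ 0 := RatFunc.X_ne_zero

lemma v_pow_ne_one {t : ℕ} (ht : t ≠ 0) : (v : K) ^ t ≠ 1 := by
  intro h
  have h1 : (algebraMap (Polynomial ℚ) (RatFunc ℚ)) (Polynomial.X ^ t)
      = algebraMap (Polynomial ℚ) (RatFunc ℚ) 1 := by
    simpa [map_pow, RatFunc.algebraMap_X, v] using h
  have h2 : (Polynomial.X : Polynomial ℚ) ^ t = 1 := RatFunc.algebraMap_injective ℚ h1
  have h3 := congrArg Polynomial.natDegree h2
  simp [Polynomial.natDegree_X_pow] at h3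
  exact ht h3

lemma v_zpow_eq_one {j : ℤ} (h : (v : K) ^ j = 1) : j = 0 := by
  rcases j.eq_nat_or_neg with ⟨t, rfl | rfl⟩
  · rcases Nat.eq_zero_or_pos t with ht | ht
    · simp [ht]
    · exfalso
      apply v_pow_ne_one ht.ne'
      rw [← zpow_natCast]
      exact h
  · rcases Nat.eq_zero_or_pos t with ht | ht
    · simp [ht]
    · exfalso
      apply v_pow_ne_one ht.ne'
      rw [← zpow_natCast]
      rw [zpow_neg] at h
      rw [← inv_eq_one]
      exact h

lemma hden : (v : K) - v⁻¹ ≠ 0 := by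
  intro h
  have hv : (v : K) = v⁻¹ := sub_eq_zero.mp h
  have h2 : (v : K) ^ 2 = 1 := by
    rw [sq]
    nth_rewrite 2 [hv]
    exact mul_inv_cancel₀ hv0
  exact v_pow_ne_one two_ne_zero h2

lemma qint_ne_zero {n : ℤ} (hn : n ≠ 0) : qint n ≠ 0 := by
  apply div_ne_zero _ hden
  rw [sub_ne_zero]
  intro h
  have h2 : (v : K) ^ (2 * n) = 1 := by
    rw [two_mul, zpow_add₀ hv0]
    nth_rewrite 2 [h]
    rw [← zpow_add₀ hv0, add_neg_cancel, zpow_zero]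
  have := v_zpow_eq_one h2
  omega

lemma qint_zero : qint 0 = 0 := by simp [qint]

lemma qfact_ne_zero : ∀ n : ℕ, qfact n ≠ 0
  | 0 => one_ne_zero
  | n + 1 => mul_ne_zero (qfact_ne_zero n) (qint_ne_zero (by omega))

lemma ddfact_ne_zero : ∀ n : ℕ, ddfact n ≠ 0
  | 0 => one_ne_zero
  | n + 1 => mul_ne_zero (ddfact_ne_zero n) (qint_ne_zero (by omega))

lemma qint_add (a b : ℤ) : qint (a + b) = v ^ b * qint a + v ^ (-a) * qint b := by
  unfold qint
  rw [← mul_div_assoc, ← mul_div_assoc, ← add_div]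
  congr 1
  rw [neg_add, zpow_add₀ hv0 a b, zpow_add₀ hv0 (-a) (-b)]
  ring

lemma qint_two_mul (a : ℤ) : qint (2 * a) = qint a * (v ^ a + v ^ (-a)) := by
  unfold qint
  rw [div_mul_eq_mul_div]
  congr 1
  rw [two_mul, zpow_add₀ hv0, neg_add, zpow_add₀ hv0]
  ring

lemma two_c2 (x : ℤ) : c2 x * 2 = x * (x - 1) := by
  have h : (2 : ℤ) ∣ x * (x - 1) := by
    rcases Int.even_or_odd x with he | ho
    · exact Dvd.dvd.mul_right he.two_dvd _
    · have : Even (x - 1) := by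
        rcases ho with ⟨k, hk⟩
        exact ⟨k, by omega⟩
      exact Dvd.dvd.mul_left this.two_dvd _
  exact Int.ediv_mul_cancel h


lemma key_cancel (Q x c d : K) (hQ : Q ≠ 0) : Q * (x / (c * (d * Q))) = x / (c * d) := by
  rcases eq_or_ne c 0 with rfl | hc
  · simp
  rcases eq_or_ne d 0 with rfl | hd
  · simp
  field_simp

lemma key_cancel' (Q x c d : K) (hQ : Q ≠ 0) : Q * (x / (c * Q * d)) = x / (c * d) := by
  rw [show c * Q * d = c * (d * Q) by ring, key_cancel Q x c d hQ]

def Bb (n : ℕ) : K :=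
  ∑ k ∈ range (n + 1), v ^ (2 * ((n : ℤ) - k) - 2 * k * ((n : ℤ) - k)) / (ddfact k * ddfact (n - k))

lemma Bb_rec (n : ℕ) :
    qint (2 * ((n : ℤ) + 1)) * Bb (n + 1) = (v ^ (2 : ℤ) + v ^ (-2 * (n : ℤ))) * Bb n := by
  have hA : qint (2 * ((n : ℤ) + 1)) * Bb (n + 1)
      = (∑ k ∈ range (n + 2),
          v ^ (2 * (k : ℤ)) * qint (2 * ((n : ℤ) + 1 - k)) *
            (v ^ (2 * (((n+1:ℕ) : ℤ) - k) - 2 * k * (((n+1:ℕ) : ℤ) - k)) / (ddfact k * ddfact (n + 1 - k))))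
      + (∑ k ∈ range (n + 2),
          v ^ (-2 * ((n : ℤ) + 1 - k)) * qint (2 * (k : ℤ)) *
            (v ^ (2 * (((n+1:ℕ) : ℤ) - k) - 2 * k * (((n+1:ℕ) : ℤ) - k)) / (ddfact k * ddfact (n + 1 - k)))) := by
    rw [Bb, mul_sum, ← sum_add_distrib]
    refine sum_congr rfl fun k hk => ?_
    have hsplit : qint (2 * ((n : ℤ) + 1))
        = v ^ (2 * (k : ℤ)) * qint (2 * ((n : ℤ) + 1 - k)) + v ^ (-(2 * ((n : ℤ) + 1 - k))) * qint (2 * (k : ℤ)) := by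
      rw [show 2 * ((n : ℤ) + 1) = 2 * ((n : ℤ) + 1 - k) + 2 * (k : ℤ) by ring]
      exact qint_add _ _
    rw [hsplit, show -(2 * ((n : ℤ) + 1 - (k:ℤ))) = -2 * ((n : ℤ) + 1 - k) by ring]
    ring
  rw [hA]
  have hA2 : (∑ k ∈ range (n + 2),
          v ^ (2 * (k : ℤ)) * qint (2 * ((n : ℤ) + 1 - k)) *
            (v ^ (2 * (((n+1:ℕ) : ℤ) - k) - 2 * k * (((n+1:ℕ) : ℤ) - k)) / (ddfact k * ddfact (n + 1 - k))))
      = v ^ (2 : ℤ) * Bb n := by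
    rw [sum_range_succ]
    have hlast : qint (2 * ((n : ℤ) + 1 - ((n+1:ℕ):ℤ))) = 0 := by
      rw [show 2 * ((n : ℤ) + 1 - ((n+1:ℕ):ℤ)) = 0 by push_cast; ring, qint_zero]
    rw [hlast, mul_zero, zero_mul, add_zero, Bb, mul_sum]
    refine sum_congr rfl fun k hk => ?_
    rw [mem_range] at hk
    have hk' : k ≤ n := by omega
    have hdd : ddfact (n + 1 - k) = ddfact (n - k) * qint (2 * ((n : ℤ) + 1 - k)) := by
      rw [show n + 1 - k = (n - k) + 1 by omega]
      show ddfact (n - k) * qint (2 * (((n - k : ℕ) : ℤ) + 1)) = _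
      rw [show 2 * (((n - k : ℕ) : ℤ) + 1) = 2 * ((n : ℤ) + 1 - k) by
        have : ((n - k : ℕ) : ℤ) = (n : ℤ) - k := by omega
        rw [this]; ring]
    rw [hdd]
    have hq : qint (2 * ((n : ℤ) + 1 - k)) ≠ 0 := qint_ne_zero (by omega)
    rw [mul_assoc, key_cancel _ _ _ _ hq]
    rw [← mul_div_assoc, ← mul_div_assoc]
    congr 1
    rw [← zpow_add₀ hv0, ← zpow_add₀ hv0]
    congr 1
    push_cast
    ring
  rw [hA2]
  have hB2 : (∑ k ∈ range (n + 2),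
          v ^ (-2 * ((n : ℤ) + 1 - k)) * qint (2 * (k : ℤ)) *
            (v ^ (2 * (((n+1:ℕ) : ℤ) - k) - 2 * k * (((n+1:ℕ) : ℤ) - k)) / (ddfact k * ddfact (n + 1 - k))))
      = v ^ (-2 * (n : ℤ)) * Bb n := by
    set G : ℕ → K := fun i => v ^ (-2 * ((i : ℤ) + 1) * ((n : ℤ) - i)) / (ddfact i * ddfact (n - i)) with hG
    have hstep : (∑ k ∈ range (n + 2),
          v ^ (-2 * ((n : ℤ) + 1 - k)) * qint (2 * (k : ℤ)) *
            (v ^ (2 * (((n+1:ℕ) : ℤ) - k) - 2 * k * (((n+1:ℕ) : ℤ) - k)) / (ddfact k * ddfact (n + 1 - k))))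
        = ∑ i ∈ range (n + 1), G i := by
      rw [sum_range_succ']
      have h0 : qint (2 * (((0:ℕ)) : ℤ)) = 0 := by
        norm_num [qint_zero]
      rw [h0]
      simp only [mul_zero, zero_mul, add_zero]
      refine sum_congr rfl fun i hi => ?_
      rw [mem_range] at hi
      have hdd : ddfact (i + 1) = ddfact i * qint (2 * ((i : ℤ) + 1)) := rfl
      have hcast : (2 : ℤ) * (((i+1:ℕ)) : ℤ) = 2 * ((i : ℤ) + 1) := by push_cast; ring
      rw [show n + 1 - (i + 1) = n - i by omega, hdd, hcast]
      have hq : qint (2 * ((i : ℤ) + 1)) ≠ 0 := qint_ne_zero (by omega)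
      rw [mul_assoc, key_cancel' _ _ _ _ hq, ← mul_div_assoc, ← zpow_add₀ hv0, hG]
      simp only []
      congr 1
      push_cast
      ring
    rw [hstep]
    have hrefl : ∑ j ∈ range (n + 1), G (n - j) = ∑ j ∈ range (n + 1), G j := by
      simpa using sum_range_reflect G (n + 1)
    rw [← hrefl, Bb, mul_sum]
    refine sum_congr rfl fun j hj => ?_
    rw [mem_range] at hj
    have hc : ((n - j : ℕ) : ℤ) = (n : ℤ) - j := by omega
    rw [hG]
    simp only []
    rw [show n - (n - j) = j by omega, hc, mul_comm (ddfact (n - j)) (ddfact j),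
      ← mul_div_assoc, ← zpow_add₀ hv0]
    congr 1
    ring
  rw [hB2]
  ring

lemma key_cancel2 (Q x c : K) (hQ : Q ≠ 0) : Q * (x / (c * Q)) = x / c := by
  rcases eq_or_ne c 0 with rfl | hc
  · simp
  field_simp

lemma c2_succ (x : ℤ) : c2 (x + 1) = c2 x + x := by
  have h1 := two_c2 x
  have h2 := two_c2 (x + 1)
  have h3 : c2 (x + 1) * 2 = c2 x * 2 + 2 * x := by rw [h1, h2]; ring
  linarith

lemma B_closed (n : ℕ) : Bb n = v ^ ((n : ℤ) - c2 (n : ℤ)) / qfact n := by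
  induction n with
  | zero =>
    rw [Bb]
    norm_num [c2, qfact, ddfact]
  | succ n ih =>
    have hq : qint (2 * ((n : ℤ) + 1)) ≠ 0 := qint_ne_zero (by omega)
    apply mul_left_cancel₀ hq
    rw [Bb_rec n, ih, qint_two_mul ((n : ℤ) + 1)]
    have hfact : qfact (n + 1) = qfact n * qint ((n : ℤ) + 1) := rfl
    rw [hfact]
    have hq1 : qint ((n : ℤ) + 1) ≠ 0 := qint_ne_zero (by omega)
    rw [mul_comm (qint ((n : ℤ) + 1)) (v ^ ((n : ℤ) + 1) + v ^ (-((n : ℤ) + 1))), mul_assoc,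
      key_cancel2 _ _ _ hq1]
    have hc2 : c2 (((n + 1 : ℕ)) : ℤ) = c2 (n : ℤ) + n := by
      rw [show (((n + 1 : ℕ)) : ℤ) = (n : ℤ) + 1 by push_cast; ring, c2_succ]
    rw [← mul_div_assoc, ← mul_div_assoc]
    congr 1
    rw [add_mul, add_mul, ← zpow_add₀ hv0, ← zpow_add₀ hv0, ← zpow_add₀ hv0, ← zpow_add₀ hv0]
    congr 1
    · congr 1
      push_cast
      rw [c2_succ]
      ring
    · congr 1
      push_cast
      rw [c2_succ]
      ring

lemma F_zero (d : ℕ) (hd : 1 ≤ d) :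
    ∑ n ∈ range (d + 1), (-1 : K) ^ n * v ^ ((n : ℤ) * (1 - (d : ℤ))) / (qfact n * qfact (d - n)) = 0 := by
  have hqd : qint (d : ℤ) ≠ 0 := qint_ne_zero (by omega)
  apply mul_left_cancel₀ hqd
  rw [mul_zero, mul_sum]
  set G : ℕ → K := fun i => (-1 : K) ^ i * v ^ (-(i : ℤ) * d) / (qfact i * qfact (d - 1 - i)) with hG
  have hsplit : ∀ n ∈ range (d + 1),
      qint (d : ℤ) * ((-1 : K) ^ n * v ^ ((n : ℤ) * (1 - (d : ℤ))) / (qfact n * qfact (d - n)))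
      = v ^ ((d : ℤ) - n) * qint (n : ℤ) * ((-1 : K) ^ n * v ^ ((n : ℤ) * (1 - (d : ℤ))) / (qfact n * qfact (d - n)))
      + v ^ (-(n : ℤ)) * qint ((d : ℤ) - n) * ((-1 : K) ^ n * v ^ ((n : ℤ) * (1 - (d : ℤ))) / (qfact n * qfact (d - n))) := by
    intro n _
    have h : qint (d : ℤ) = v ^ ((d : ℤ) - n) * qint (n : ℤ) + v ^ (-(n : ℤ)) * qint ((d : ℤ) - n) := by
      have h' := qint_add ((n : ℤ)) ((d : ℤ) - n)
      rw [show (n : ℤ) + ((d : ℤ) - n) = (d : ℤ) by ring] at h'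
      exact h'
    rw [h]
    ring
  rw [sum_congr rfl hsplit, sum_add_distrib]
  have hS1 : (∑ n ∈ range (d + 1),
      v ^ ((d : ℤ) - n) * qint (n : ℤ) * ((-1 : K) ^ n * v ^ ((n : ℤ) * (1 - (d : ℤ))) / (qfact n * qfact (d - n))))
      = ∑ i ∈ range d, -G i := by
    rw [sum_range_succ']
    have h0 : qint (((0 : ℕ)) : ℤ) = 0 := by norm_num [qint_zero]
    rw [h0]
    simp only [mul_zero, zero_mul, add_zero]
    refine sum_congr rfl fun i hi => ?_
    rw [mem_range] at hi
    have hcast : ((((i + 1 : ℕ))) : ℤ) = (i : ℤ) + 1 := by push_cast; ring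
    have hfs : qfact (i + 1) = qfact i * qint ((i : ℤ) + 1) := rfl
    rw [hcast, hfs, show d - (i + 1) = d - 1 - i by omega]
    have hq1 : qint ((i : ℤ) + 1) ≠ 0 := qint_ne_zero (by omega)
    rw [mul_assoc, key_cancel' _ _ _ _ hq1, pow_succ]
    rw [show v ^ ((d : ℤ) - ((i : ℤ) + 1)) * ((-1 : K) ^ i * (-1) * v ^ (((i : ℤ) + 1) * (1 - (d : ℤ))) /
          (qfact i * qfact (d - 1 - i)))
        = -((-1 : K) ^ i * (v ^ ((d : ℤ) - ((i : ℤ) + 1)) * v ^ (((i : ℤ) + 1) * (1 - (d : ℤ)))) /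
          (qfact i * qfact (d - 1 - i))) by ring,
      ← zpow_add₀ hv0,
      show ((d : ℤ) - ((i : ℤ) + 1)) + ((i : ℤ) + 1) * (1 - (d : ℤ)) = -(i : ℤ) * d by ring]
  have hS2 : (∑ n ∈ range (d + 1),
      v ^ (-(n : ℤ)) * qint ((d : ℤ) - n) * ((-1 : K) ^ n * v ^ ((n : ℤ) * (1 - (d : ℤ))) / (qfact n * qfact (d - n))))
      = ∑ n ∈ range d, G n := by
    rw [sum_range_succ]
    rw [show (d : ℤ) - ((d : ℕ) : ℤ) = 0 by ring, qint_zero]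
    simp only [mul_zero, zero_mul, add_zero]
    refine sum_congr rfl fun n hn => ?_
    rw [mem_range] at hn
    rw [show d - n = (d - 1 - n) + 1 by omega]
    have hfs : qfact ((d - 1 - n) + 1) = qfact (d - 1 - n) * qint (((d - 1 - n : ℕ) : ℤ) + 1) := rfl
    have hcast2 : ((d - 1 - n : ℕ) : ℤ) + 1 = (d : ℤ) - n := by omega
    rw [hfs, hcast2]
    have hq2 : qint ((d : ℤ) - n) ≠ 0 := qint_ne_zero (by omega)
    rw [mul_assoc, key_cancel _ _ _ _ hq2]
    rw [show v ^ (-(n : ℤ)) * ((-1 : K) ^ n * v ^ ((n : ℤ) * (1 - (d : ℤ))) / (qfact n * qfact (d - 1 - n)))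
        = (-1 : K) ^ n * (v ^ (-(n : ℤ)) * v ^ ((n : ℤ) * (1 - (d : ℤ)))) / (qfact n * qfact (d - 1 - n)) by ring,
      ← zpow_add₀ hv0,
      show -(n : ℤ) + (n : ℤ) * (1 - (d : ℤ)) = -(n : ℤ) * d by ring]
  rw [hS1, hS2, ← sum_add_distrib]
  exact sum_eq_zero fun i _ => by ring

lemma tri_rect (d : ℕ) (g : ℕ → ℕ → K) :
    ∑ k ∈ range (d + 1), ∑ m ∈ range (d + 1 - k), g k m
    = ∑ k ∈ range (d + 1), ∑ m ∈ range (d + 1), if k + m ≤ d then g k m else 0 := by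
  refine sum_congr rfl fun k hk => ?_
  rw [mem_range] at hk
  calc ∑ m ∈ range (d + 1 - k), g k m
      = ∑ m ∈ range (d + 1 - k), (if k + m ≤ d then g k m else 0) := by
        refine sum_congr rfl fun m hm => ?_
        rw [mem_range] at hm
        rw [if_pos (by omega)]
    _ = ∑ m ∈ range (d + 1), (if k + m ≤ d then g k m else 0) := by
        apply sum_subset
        · intro x hx
          rw [mem_range] at hx ⊢
          omega
        · intro x hx hnx
          rw [mem_range] at hx hnx
          rw [if_neg (by omega)]

lemma tri_comm (d : ℕ) (f : ℕ → ℕ → K) :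
    ∑ k ∈ range (d + 1), ∑ m ∈ range (d + 1 - k), f k m
    = ∑ k ∈ range (d + 1), ∑ m ∈ range (d + 1 - k), f m k := by
  rw [tri_rect d f, tri_rect d (fun k m => f m k), Finset.sum_comm]
  refine sum_congr rfl fun k _ => sum_congr rfl fun m _ => ?_
  rw [Nat.add_comm]

lemma tri_group (d : ℕ) (f : ℕ → ℕ → K) :
    ∑ k ∈ range (d + 1), ∑ m ∈ range (d + 1 - k), f k m
    = ∑ n ∈ range (d + 1), ∑ k ∈ range (n + 1), f k (n - k) := by
  have hR : ∑ n ∈ range (d + 1), ∑ k ∈ range (n + 1), f k (n - k)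
      = ∑ n ∈ range (d + 1), ∑ k ∈ range (d + 1), if k ≤ n then f k (n - k) else 0 := by
    refine sum_congr rfl fun n hn => ?_
    rw [mem_range] at hn
    calc ∑ k ∈ range (n + 1), f k (n - k)
        = ∑ k ∈ range (n + 1), (if k ≤ n then f k (n - k) else 0) := by
          refine sum_congr rfl fun k hk => ?_
          rw [mem_range] at hk
          rw [if_pos (by omega)]
      _ = ∑ k ∈ range (d + 1), (if k ≤ n then f k (n - k) else 0) := by
          apply sum_subset
          · intro x hx
            rw [mem_range] at hx ⊢
            omega
          · intro x hx hnx
            rw [mem_range] at hx hnx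
            rw [if_neg (by omega)]
  rw [hR, Finset.sum_comm]
  refine sum_congr rfl fun k hk => ?_
  rw [mem_range] at hk
  have h1 : ∑ n ∈ range (d + 1), (if k ≤ n then f k (n - k) else 0)
      = ∑ n ∈ Ico k (d + 1), (if k ≤ n then f k (n - k) else 0) := by
    rw [range_eq_Ico]
    symm
    apply sum_subset
    · exact Ico_subset_Ico (Nat.zero_le k) le_rfl
    · intro x hx hnx
      rw [mem_Ico] at hx hnx
      rw [if_neg (by omega)]
  rw [h1, sum_Ico_eq_sum_range]
  rw [show d + 1 - k = d + 1 - k from rfl]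
  refine sum_congr rfl fun m hm => ?_
  rw [mem_range] at hm
  rw [if_pos (by omega), show k + m - k = m by omega]

def Tt (d k m : ℕ) : K :=
  (-1 : K) ^ (d - k - m) * v ^ (c2 ((d : ℤ) - k - m + 1) - 2 * ((k : ℤ) - 1) * (m : ℤ)) /
    (qfact (d - k - m) * ddfact k * ddfact m)

lemma neg_one_pow_sub {n d : ℕ} (h : n ≤ d) : (-1 : K) ^ (d - n) = (-1) ^ d * (-1) ^ n := by
  have h1 : (-1 : K) ^ (d - n) * (-1) ^ n = (-1) ^ d := by
    rw [← pow_add]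
    congr 1
    omega
  have h2 : ((-1 : K) ^ n) * ((-1) ^ n) = 1 := by
    rw [← pow_add, ← two_mul, pow_mul]
    norm_num
  calc (-1 : K) ^ (d - n) = (-1) ^ (d - n) * ((-1) ^ n * (-1) ^ n) := by rw [h2, mul_one]
    _ = (-1) ^ d * (-1) ^ n := by rw [← mul_assoc, h1]

theorem symmetrized_triple_sum_vanishes (a u w : ℤ) (d : ℕ) (hd : 1 ≤ d) (hw : 0 ≤ w) :
    (∑ k ∈ range (d + 1), ∑ m ∈ range (d + 1 - k),
      if (d - k - m) % 2 = 0 then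
        (-1 : K) ^ (d - k - m) *
          v ^ (c2 ((d : ℤ) - k - m + 1) - 2 * ((k : ℤ) - 1) * (m : ℤ))
          / (qfact (d - k - m) * ddfact k * ddfact m)
      else 0)
    + (∑ k ∈ range (d + 1), ∑ m ∈ range (d + 1 - k),
      if (d - k - m) % 2 = 1 then
        (-1 : K) ^ (d - k - m) *
          v ^ (c2 ((d : ℤ) - k - m + 1) - 2 * (k : ℤ) * ((m : ℤ) - 1))
          / (qfact (d - k - m) * ddfact k * ddfact m)
      else 0) = 0 := by
  -- Step 1: swap (k,m) in the second sum
  have hswap : (∑ k ∈ range (d + 1), ∑ m ∈ range (d + 1 - k),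
      if (d - k - m) % 2 = 1 then
        (-1 : K) ^ (d - k - m) *
          v ^ (c2 ((d : ℤ) - k - m + 1) - 2 * (k : ℤ) * ((m : ℤ) - 1))
          / (qfact (d - k - m) * ddfact k * ddfact m)
      else 0)
      = ∑ k ∈ range (d + 1), ∑ m ∈ range (d + 1 - k),
        (if (d - k - m) % 2 = 1 then Tt d k m else 0) := by
    rw [tri_comm d (fun k m =>
      if (d - k - m) % 2 = 1 then
        (-1 : K) ^ (d - k - m) *
          v ^ (c2 ((d : ℤ) - k - m + 1) - 2 * (k : ℤ) * ((m : ℤ) - 1))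
          / (qfact (d - k - m) * ddfact k * ddfact m)
      else 0)]
    refine sum_congr rfl fun k hk => sum_congr rfl fun m hm => ?_
    rw [show d - m - k = d - k - m by omega]
    by_cases hpar : (d - k - m) % 2 = 1
    · rw [if_pos hpar, if_pos hpar, Tt,
        show (d : ℤ) - (m : ℤ) - (k : ℤ) + 1 = (d : ℤ) - (k : ℤ) - (m : ℤ) + 1 by ring,
        show 2 * (m : ℤ) * ((k : ℤ) - 1) = 2 * ((k : ℤ) - 1) * (m : ℤ) by ring]
      ring
    · rw [if_neg hpar, if_neg hpar]
  rw [hswap]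
  have hfirst : (∑ k ∈ range (d + 1), ∑ m ∈ range (d + 1 - k),
      if (d - k - m) % 2 = 0 then
        (-1 : K) ^ (d - k - m) *
          v ^ (c2 ((d : ℤ) - k - m + 1) - 2 * ((k : ℤ) - 1) * (m : ℤ))
          / (qfact (d - k - m) * ddfact k * ddfact m)
      else 0)
      = ∑ k ∈ range (d + 1), ∑ m ∈ range (d + 1 - k),
        (if (d - k - m) % 2 = 0 then Tt d k m else 0) := rfl
  rw [hfirst, ← sum_add_distrib]
  have hmerge : ∀ k ∈ range (d + 1),
      ((∑ m ∈ range (d + 1 - k), (if (d - k - m) % 2 = 0 then Tt d k m else 0))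
      + ∑ m ∈ range (d + 1 - k), (if (d - k - m) % 2 = 1 then Tt d k m else 0))
      = ∑ m ∈ range (d + 1 - k), Tt d k m := by
    intro k _
    rw [← sum_add_distrib]
    refine sum_congr rfl fun m _ => ?_
    rcases Nat.mod_two_eq_zero_or_one (d - k - m) with h | h
    · rw [if_pos h, if_neg (by omega), add_zero]
    · rw [if_neg (by omega), if_pos h, zero_add]
  rw [sum_congr rfl hmerge, tri_group d (fun k m => Tt d k m)]
  -- Step 2: inner sums are Bb n
  have hinner : ∀ n ∈ range (d + 1),
      (∑ k ∈ range (n + 1), Tt d k (n - k))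
      = ((-1 : K) ^ (d - n) * v ^ (c2 ((d : ℤ) - n + 1)) / qfact (d - n)) * Bb n := by
    intro n hn
    rw [mem_range] at hn
    rw [Bb, mul_sum]
    refine sum_congr rfl fun k hk => ?_
    rw [mem_range] at hk
    rw [Tt, show d - k - (n - k) = d - n by omega]
    have hc : ((n - k : ℕ) : ℤ) = (n : ℤ) - k := by omega
    rw [hc,
      show (d : ℤ) - (k : ℤ) - ((n : ℤ) - (k : ℤ)) + 1 = (d : ℤ) - (n : ℤ) + 1 by ring,
      show c2 ((d : ℤ) - (n : ℤ) + 1) - 2 * ((k : ℤ) - 1) * ((n : ℤ) - (k : ℤ))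
        = c2 ((d : ℤ) - (n : ℤ) + 1) + (2 * ((n : ℤ) - k) - 2 * k * ((n : ℤ) - k)) by ring,
      zpow_add₀ hv0]
    ring
  rw [sum_congr rfl hinner]
  -- Step 3: closed form and Gauss vanishing
  have hterm : ∀ n ∈ range (d + 1),
      ((-1 : K) ^ (d - n) * v ^ (c2 ((d : ℤ) - n + 1)) / qfact (d - n)) * Bb n
      = ((-1 : K) ^ d * v ^ (c2 ((d : ℤ) + 1))) *
        ((-1 : K) ^ n * v ^ ((n : ℤ) * (1 - (d : ℤ))) / (qfact n * qfact (d - n))) := by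
    intro n hn
    rw [mem_range] at hn
    rw [B_closed n, neg_one_pow_sub (by omega : n ≤ d)]
    have hexp : c2 ((d : ℤ) - n + 1) + ((n : ℤ) - c2 ((n : ℤ)))
        = c2 ((d : ℤ) + 1) + (n : ℤ) * (1 - (d : ℤ)) := by
      have h1 := two_c2 ((d : ℤ) - n + 1)
      have h2 := two_c2 ((n : ℤ))
      have h3 := two_c2 ((d : ℤ) + 1)
      have h4 : (c2 ((d : ℤ) - n + 1) + ((n : ℤ) - c2 ((n : ℤ)))) * 2
          = (c2 ((d : ℤ) + 1) + (n : ℤ) * (1 - (d : ℤ))) * 2 := by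
        linear_combination h1 - h2 - h3
      linarith
    have hmerge2 : v ^ (c2 ((d : ℤ) - n + 1)) * v ^ ((n : ℤ) - c2 ((n : ℤ)))
        = v ^ (c2 ((d : ℤ) + 1)) * v ^ ((n : ℤ) * (1 - (d : ℤ))) := by
      rw [← zpow_add₀ hv0, ← zpow_add₀ hv0, hexp]
    calc (-1 : K) ^ d * (-1) ^ n * v ^ (c2 ((d : ℤ) - n + 1)) / qfact (d - n) *
          (v ^ ((n : ℤ) - c2 ((n : ℤ))) / qfact n)
        = (v ^ (c2 ((d : ℤ) - n + 1)) * v ^ ((n : ℤ) - c2 ((n : ℤ)))) *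
          ((-1 : K) ^ d * (-1) ^ n / (qfact (d - n) * qfact n)) := by ring
      _ = (v ^ (c2 ((d : ℤ) + 1)) * v ^ ((n : ℤ) * (1 - (d : ℤ)))) *
          ((-1 : K) ^ d * (-1) ^ n / (qfact (d - n) * qfact n)) := by rw [hmerge2]
      _ = ((-1 : K) ^ d * v ^ (c2 ((d : ℤ) + 1))) *
          ((-1 : K) ^ n * v ^ ((n : ℤ) * (1 - (d : ℤ))) / (qfact n * qfact (d - n))) := by ring
  rw [sum_congr rfl hterm, ← mul_sum]
  rw [show (∑ n ∈ range (d + 1),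
      (-1 : K) ^ n * v ^ ((n : ℤ) * (1 - (d : ℤ))) / (qfact n * qfact (d - n))) = 0 from F_zero d hd]
  rw [mul_zero]
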